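/- Let Φ : [0,1]^n → [0,1]^n be Φ(X) = (1ₙ + tanh(∇f(X)))/2 and set J_α = ¼ Σ_{q=1}^l |α_q| m_q (m_q − 1). Then for all X, Y ∈ [0,1]^n, ‖Φ(X) − Φ(Y)‖₁ ≤ J_α ‖X − Y‖₁; in particular, if J_α < 1 then Φ is a contraction in the 1-norm. -/

import Mathlib

open MeasureTheory ProbabilityTheory Real Set

noncomputable section

/-- The real-valued vertex configuration associated to a boolean configuration. -/
def boolToR (n : ℕ) (X : Fin n → Bool) : Fin n → ℝ := fun i => if X i then 1 else 0

/-- The 1-norm on ℝⁿ. -/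
def norm1 (n : ℕ) (x : Fin n → ℝ) : ℝ := ∑ i, |x i|

/-- `C_j^m(X)`: the sum over (m-1)-tuples of pairwise distinct indices, all distinct
from `j`, of the products of the corresponding entries of `X`; `C_j^1 = 1`. -/
def Cvec (n m : ℕ) (X : Fin n → ℝ) (j : Fin n) : ℝ :=
  ∑ g ∈ Finset.univ.filter (fun g : Fin (m - 1) ↪ Fin n => ∀ k, g k ≠ j),
    ∏ k, X (g k)

/-- The subgraph counting function with parameters `p`, `m₁,…,m_l`, `α₁,…,α_l`. -/
def scf (n l : ℕ) (p : ℝ) (m : Fin l → ℕ) (α : Fin l → ℝ) (X : Fin n → ℝ) : ℝ :=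
  (∑ q, (α q / (n : ℝ) ^ (m q - 1)) * ∑ g : Fin (m q) ↪ Fin n, ∏ k, X (g k)) +
    Real.log (p / (1 - p)) * ∑ i, |X i|

/-- The discrete derivative `∂ⱼf(X) = (f(X^{j←1}) - f(X^{j←0}))/2`. -/
def dder (n : ℕ) (f : (Fin n → ℝ) → ℝ) (X : Fin n → ℝ) (j : Fin n) : ℝ :=
  (f (Function.update X j 1) - f (Function.update X j 0)) / 2

/-- The polynomial extension of the discrete gradient of the subgraph counting function:
`∂ⱼf(X) = Σ_q (m_q α_q/(2 n^{m_q-1})) C_j^{m_q}(X) + ½ log(p/(1-p))`. -/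
def gradf (n l : ℕ) (p : ℝ) (m : Fin l → ℕ) (α : Fin l → ℝ) (X : Fin n → ℝ)
    (j : Fin n) : ℝ :=
  (∑ q, ((m q : ℝ) * α q / (2 * (n : ℝ) ^ (m q - 1))) * Cvec n (m q) X j) +
    Real.log (p / (1 - p)) / 2

/-- `C_α = max{2, ½|log(p/(1-p))| + ½ Σ_q |α_q| m_q (m_q - 1)}`. -/
def Calpha (l : ℕ) (p : ℝ) (m : Fin l → ℕ) (α : Fin l → ℝ) : ℝ :=
  max 2 (|Real.log (p / (1 - p))| / 2 + (∑ q, |α q| * (m q : ℝ) * ((m q : ℝ) - 1)) / 2)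

/-- `Φ(X) = (1ₙ + tanh(∇f(X)))/2`, entrywise. -/
def Phi (n l : ℕ) (p : ℝ) (m : Fin l → ℕ) (α : Fin l → ℝ) (X : Fin n → ℝ) :
    Fin n → ℝ :=
  fun j => (1 + Real.tanh (gradf n l p m α X j)) / 2

/-- The set `X_f` of near fixed points of `X ↦ (1ₙ + tanh(∇f(X)))/2` in `[0,1]ⁿ`. -/
def Xf (n l : ℕ) (p : ℝ) (m : Fin l → ℕ) (α : Fin l → ℝ) : Set (Fin n → ℝ) :=
  {X | (∀ i, X i ∈ Set.Icc (0:ℝ) 1) ∧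
    norm1 n (fun j => X j - Phi n l p m α X j) ≤
      5000 * (Calpha l p m α) ^ 2 * (n : ℝ) ^ ((7:ℝ)/8)}

/-- The one-dimensional fixed point function `φ_α`. -/
def phiA (n l : ℕ) (p : ℝ) (m : Fin l → ℕ) (α : Fin l → ℝ) (x : ℝ) : ℝ :=
  (1 + Real.tanh (Real.log (p / (1 - p)) / 2 +
    (∑ q, (m q : ℝ) * α q * (∏ i ∈ Finset.Icc 1 (m q - 1), (1 - (i : ℝ) / n)) *
      x ^ (m q - 1)) / 2)) / 2

/-- for all `X, Y ∈ [0,1]ⁿ`,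
`‖Φ(X) - Φ(Y)‖₁ ≤ J_α ‖X - Y‖₁` with `J_α = ¼ Σ_q |α_q| m_q (m_q - 1)`; in
particular `Φ` is a 1-norm contraction when `J_α < 1`. -/

lemma myHasDerivAt_tanh (x : ℝ) : HasDerivAt Real.tanh (1 / Real.cosh x ^ 2) x := by
  have h : HasDerivAt (fun y => Real.sinh y / Real.cosh y)
      ((Real.cosh x * Real.cosh x - Real.sinh x * Real.sinh x) / Real.cosh x ^ 2) x :=
    (Real.hasDerivAt_sinh x).div (Real.hasDerivAt_cosh x) (Real.cosh_pos x).ne'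
  have he : Real.tanh = fun y => Real.sinh y / Real.cosh y := funext Real.tanh_eq_sinh_div_cosh
  rw [he]
  convert h using 2
  have := Real.cosh_sq x
  nlinarith

lemma tanh_lip (a b : ℝ) : |Real.tanh a - Real.tanh b| ≤ |a - b| := by
  have key := convex_univ.norm_image_sub_le_of_norm_deriv_le (f := Real.tanh) (C := 1)
    (fun x _ => (myHasDerivAt_tanh x).differentiableAt)
    (fun x _ => by
      rw [(myHasDerivAt_tanh x).deriv, Real.norm_eq_abs]
      have h1 : (1:ℝ) ≤ Real.cosh x ^ 2 := by nlinarith [Real.one_le_cosh x]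
      rw [abs_of_nonneg (by positivity)]
      rw [div_le_one (by positivity)]
      exact h1)
    (Set.mem_univ b) (Set.mem_univ a)
  simpa [Real.norm_eq_abs] using key

lemma prod_sub_prod_abs_le {ι : Type*} [DecidableEq ι] (s : Finset ι) (a b : ι → ℝ)
    (ha : ∀ i, a i ∈ Set.Icc (0:ℝ) 1) (hb : ∀ i, b i ∈ Set.Icc (0:ℝ) 1) :
    |∏ i ∈ s, a i - ∏ i ∈ s, b i| ≤ ∑ i ∈ s, |a i - b i| := by
  induction s using Finset.induction_on with
  | empty => simp
  | @insert i s hi ih =>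
    rw [Finset.prod_insert hi, Finset.prod_insert hi, Finset.sum_insert hi]
    have hpa : |∏ j ∈ s, a j| ≤ 1 := by
      rw [abs_of_nonneg (Finset.prod_nonneg fun j _ => (ha j).1)]
      exact Finset.prod_le_one (fun j _ => (ha j).1) (fun j _ => (ha j).2)
    have hbi : |b i| ≤ 1 := by
      rw [abs_of_nonneg (hb i).1]; exact (hb i).2
    have key : a i * ∏ j ∈ s, a j - b i * ∏ j ∈ s, b j
        = (a i - b i) * ∏ j ∈ s, a j + b i * (∏ j ∈ s, a j - ∏ j ∈ s, b j) := by ring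
    rw [key]
    calc |(a i - b i) * ∏ j ∈ s, a j + b i * (∏ j ∈ s, a j - ∏ j ∈ s, b j)|
        ≤ |(a i - b i) * ∏ j ∈ s, a j| + |b i * (∏ j ∈ s, a j - ∏ j ∈ s, b j)| := abs_add_le _ _
      _ = |a i - b i| * |∏ j ∈ s, a j| + |b i| * |∏ j ∈ s, a j - ∏ j ∈ s, b j| := by
          rw [abs_mul, abs_mul]
      _ ≤ |a i - b i| * 1 + 1 * (∑ j ∈ s, |a j - b j|) := by
          have h0 : (0:ℝ) ≤ |a i - b i| := abs_nonneg _
          have h1 : (0:ℝ) ≤ ∑ j ∈ s, |a j - b j| := (abs_nonneg _).trans ih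
          have := mul_le_mul_of_nonneg_left ih (abs_nonneg (b i))
          nlinarith [mul_le_mul_of_nonneg_left hpa h0, mul_le_mul_of_nonneg_right hbi h1]
      _ = |a i - b i| + ∑ j ∈ s, |a j - b j| := by ring

lemma fiber_card_le (n r : ℕ) (k : Fin (r+1)) (i : Fin n) :
    (Finset.univ.filter (fun g : Fin (r+1) ↪ Fin n => g k = i)).card ≤ n ^ r := by
  classical
  have := Finset.card_le_card_of_injOn
    (s := Finset.univ.filter (fun g : Fin (r+1) ↪ Fin n => g k = i))
    (t := (Finset.univ : Finset (Fin r → Fin n)))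
    (fun g : Fin (r+1) ↪ Fin n => fun x : Fin r => g (k.succAbove x))
    (fun g _ => Finset.mem_univ _)
    (by
      intro g1 h1 g2 h2 heq
      simp only [Finset.mem_coe, Finset.mem_filter] at h1 h2
      ext x
      rcases eq_or_ne x k with rfl | hx
      · rw [h1.2, h2.2]
      · obtain ⟨y, hy⟩ := Fin.exists_succAbove_eq hx
        rw [← hy]
        exact congrArg Fin.val (congrFun heq y))
  simpa using this

lemma sum_emb_le (n r : ℕ) (hr : 1 ≤ r) (d : Fin n → ℝ) (hd : ∀ i, 0 ≤ d i) :
    ∑ g : Fin r ↪ Fin n, ∑ k, d (g k) ≤ (r : ℝ) * (n:ℝ) ^ (r - 1) * ∑ i, d i := by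
  classical
  obtain ⟨r', rfl⟩ : ∃ r', r = r' + 1 := ⟨r - 1, by omega⟩
  rw [Finset.sum_comm]
  have hk : ∀ k : Fin (r'+1), ∑ g : Fin (r'+1) ↪ Fin n, d (g k) ≤ (n:ℝ) ^ r' * ∑ i, d i := by
    intro k
    have hfib : ∑ g : Fin (r'+1) ↪ Fin n, d (g k)
        = ∑ i : Fin n, ∑ g ∈ Finset.univ.filter (fun g : Fin (r'+1) ↪ Fin n => g k = i),
            d (g k) :=
      (Finset.sum_fiberwise_of_maps_to (fun g _ => Finset.mem_univ _) _).symm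
    rw [hfib]
    have hin : ∀ i : Fin n,
        ∑ g ∈ Finset.univ.filter (fun g : Fin (r'+1) ↪ Fin n => g k = i), d (g k)
          ≤ (n:ℝ) ^ r' * d i := by
      intro i
      have hconst : ∑ g ∈ Finset.univ.filter (fun g : Fin (r'+1) ↪ Fin n => g k = i), d (g k)
          = ((Finset.univ.filter (fun g : Fin (r'+1) ↪ Fin n => g k = i)).card : ℝ) * d i := by
        rw [Finset.sum_congr rfl (fun g hg => by rw [(Finset.mem_filter.mp hg).2]),
          Finset.sum_const, nsmul_eq_mul]
      rw [hconst]
      have hc := fiber_card_le n r' k i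
      have hcR : ((Finset.univ.filter (fun g : Fin (r'+1) ↪ Fin n => g k = i)).card : ℝ)
          ≤ (n:ℝ) ^ r' := by exact_mod_cast hc
      exact mul_le_mul_of_nonneg_right hcR (hd i)
    calc ∑ i : Fin n, ∑ g ∈ Finset.univ.filter (fun g : Fin (r'+1) ↪ Fin n => g k = i), d (g k)
        ≤ ∑ i : Fin n, (n:ℝ) ^ r' * d i := Finset.sum_le_sum (fun i _ => hin i)
      _ = (n:ℝ) ^ r' * ∑ i, d i := by rw [Finset.mul_sum]
  calc ∑ k : Fin (r'+1), ∑ g : Fin (r'+1) ↪ Fin n, d (g k)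
      ≤ ∑ _k : Fin (r'+1), (n:ℝ) ^ r' * ∑ i, d i := Finset.sum_le_sum (fun k _ => hk k)
    _ = ((r'+1 : ℕ) : ℝ) * (n:ℝ) ^ (r' + 1 - 1) * ∑ i, d i := by
        rw [Finset.sum_const]
        simp [Finset.card_univ, mul_assoc]

theorem stmt13 (n l : ℕ) (p : ℝ) (hp : p ∈ Set.Ioo (0:ℝ) 1)
    (m : Fin l → ℕ) (hm : ∀ q, 2 ≤ m q) (hminj : Function.Injective m)
    (α : Fin l → ℝ) (X Y : Fin n → ℝ)
    (hX : ∀ i, X i ∈ Set.Icc (0:ℝ) 1) (hY : ∀ i, Y i ∈ Set.Icc (0:ℝ) 1) :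
    norm1 n (fun j => Phi n l p m α X j - Phi n l p m α Y j) ≤
      ((∑ q, |α q| * (m q : ℝ) * ((m q : ℝ) - 1)) / 4) * norm1 n (fun i => X i - Y i) := by
  classical
  rcases Nat.eq_zero_or_pos n with rfl | hn
  · simp [norm1]
  set d : Fin n → ℝ := fun i => |X i - Y i| with hd_def
  have hd : ∀ i, 0 ≤ d i := fun i => abs_nonneg _
  set D : ℝ := ∑ i, d i with hD_def
  have hD : 0 ≤ D := Finset.sum_nonneg fun i _ => hd i
  set S : Fin l → ℝ := fun q => ∑ g : Fin (m q - 1) ↪ Fin n, ∑ k, d (g k) with hS_def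
  have hSnonneg : ∀ q, 0 ≤ S q := fun q =>
    Finset.sum_nonneg fun g _ => Finset.sum_nonneg fun k _ => hd _
  set c : Fin l → ℝ := fun q => (m q : ℝ) * α q / (2 * (n:ℝ) ^ (m q - 1)) with hc_def
  -- Step 1: Cvec difference bound
  have hCvec : ∀ q (j : Fin n), |Cvec n (m q) X j - Cvec n (m q) Y j| ≤ S q := by
    intro q j
    unfold Cvec
    rw [← Finset.sum_sub_distrib]
    calc |∑ g ∈ Finset.univ.filter (fun g : Fin (m q - 1) ↪ Fin n => ∀ k, g k ≠ j),
            (∏ k, X (g k) - ∏ k, Y (g k))|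
        ≤ ∑ g ∈ Finset.univ.filter (fun g : Fin (m q - 1) ↪ Fin n => ∀ k, g k ≠ j),
            |∏ k, X (g k) - ∏ k, Y (g k)| := Finset.abs_sum_le_sum_abs _ _
      _ ≤ ∑ g ∈ Finset.univ.filter (fun g : Fin (m q - 1) ↪ Fin n => ∀ k, g k ≠ j),
            ∑ k, d (g k) := by
          refine Finset.sum_le_sum fun g _ => ?_
          exact prod_sub_prod_abs_le Finset.univ (fun k => X (g k)) (fun k => Y (g k))
            (fun k => hX _) (fun k => hY _)
      _ ≤ S q := Finset.sum_le_sum_of_subset_of_nonneg (Finset.filter_subset _ _)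
            (fun g _ _ => Finset.sum_nonneg fun k _ => hd _)
  -- Step 2: S bound
  have hS : ∀ q, S q ≤ ((m q - 1 : ℕ) : ℝ) * (n:ℝ) ^ (m q - 2) * D := by
    intro q
    have := sum_emb_le n (m q - 1) (by have := hm q; omega) d hd
    simpa [show m q - 1 - 1 = m q - 2 from by omega] using this
  -- Step 3: gradient difference bound
  set T : ℝ := ∑ q, |c q| * S q with hT_def
  have hg : ∀ j : Fin n, |gradf n l p m α X j - gradf n l p m α Y j| ≤ T := by
    intro j
    have he : gradf n l p m α X j - gradf n l p m α Y j
        = ∑ q, c q * (Cvec n (m q) X j - Cvec n (m q) Y j) := by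
      unfold gradf
      rw [add_sub_add_right_eq_sub, ← Finset.sum_sub_distrib]
      exact Finset.sum_congr rfl fun q _ => by rw [hc_def]; ring
    rw [he]
    calc |∑ q, c q * (Cvec n (m q) X j - Cvec n (m q) Y j)|
        ≤ ∑ q, |c q * (Cvec n (m q) X j - Cvec n (m q) Y j)| := Finset.abs_sum_le_sum_abs _ _
      _ = ∑ q, |c q| * |Cvec n (m q) X j - Cvec n (m q) Y j| := by
          exact Finset.sum_congr rfl fun q _ => abs_mul _ _
      _ ≤ T := Finset.sum_le_sum fun q _ =>
          mul_le_mul_of_nonneg_left (hCvec q j) (abs_nonneg _)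
  -- Step 4: per-q final bound
  have hfin : ∀ q, (n:ℝ) * (|c q| * S q) ≤ |α q| * (m q : ℝ) * ((m q : ℝ) - 1) * D / 2 := by
    intro q
    have h2 : 2 ≤ m q := hm q
    have hn' : (0:ℝ) < (n:ℝ) := by exact_mod_cast hn
    have hpow2 : (0:ℝ) < (n:ℝ) ^ (m q - 2) := by positivity
    have hpow : (n:ℝ) ^ (m q - 1) = (n:ℝ) * (n:ℝ) ^ (m q - 2) := by
      rw [← pow_succ']
      congr 1
      omega
    have hcast : ((m q - 1 : ℕ) : ℝ) = (m q : ℝ) - 1 := by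
      rw [Nat.cast_sub (by omega)]
      norm_num
    have habs : |c q| = (m q : ℝ) * |α q| / (2 * (n:ℝ) ^ (m q - 1)) := by
      rw [hc_def]
      rw [abs_div, abs_mul, abs_of_nonneg (by positivity : (0:ℝ) ≤ ((m q : ℕ) : ℝ)),
        abs_of_nonneg (by positivity : (0:ℝ) ≤ 2 * (n:ℝ) ^ (m q - 1))]
    rw [habs]
    calc (n:ℝ) * ((m q : ℝ) * |α q| / (2 * (n:ℝ) ^ (m q - 1)) * S q)
        ≤ (n:ℝ) * ((m q : ℝ) * |α q| / (2 * (n:ℝ) ^ (m q - 1)) *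
            (((m q - 1 : ℕ) : ℝ) * (n:ℝ) ^ (m q - 2) * D)) := by
          have hc0 : (0:ℝ) ≤ (m q : ℝ) * |α q| / (2 * (n:ℝ) ^ (m q - 1)) := by positivity
          exact mul_le_mul_of_nonneg_left (mul_le_mul_of_nonneg_left (hS q) hc0) hn'.le
      _ = |α q| * (m q : ℝ) * ((m q : ℝ) - 1) * D / 2 := by
          rw [hcast, hpow]
          field_simp
  -- Final assembly
  have hnorm1 : norm1 n (fun i => X i - Y i) = D := rfl
  rw [hnorm1]
  calc norm1 n (fun j => Phi n l p m α X j - Phi n l p m α Y j)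
      = ∑ j, |Real.tanh (gradf n l p m α X j) - Real.tanh (gradf n l p m α Y j)| / 2 := by
        unfold norm1 Phi
        refine Finset.sum_congr rfl fun j _ => ?_
        beta_reduce
        rw [show (1 + Real.tanh (gradf n l p m α X j)) / 2 -
            (1 + Real.tanh (gradf n l p m α Y j)) / 2
          = (Real.tanh (gradf n l p m α X j) - Real.tanh (gradf n l p m α Y j)) / 2 by ring,
          abs_div, abs_two]
    _ ≤ ∑ j : Fin n, T / 2 := by
        refine Finset.sum_le_sum fun j _ => ?_
        have h1 := tanh_lip (gradf n l p m α X j) (gradf n l p m α Y j)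
        have h2 := hg j
        linarith
    _ = (n:ℝ) * T / 2 := by
        rw [Finset.sum_const]
        simp [Finset.card_univ]
        ring
    _ = (∑ q, (n:ℝ) * (|c q| * S q)) / 2 := by rw [hT_def, Finset.mul_sum, Finset.sum_div]
    _ ≤ (∑ q, |α q| * (m q : ℝ) * ((m q : ℝ) - 1) * D / 2) / 2 := by
        refine div_le_div_of_nonneg_right ?_ (by norm_num) |>.trans_eq rfl
        exact Finset.sum_le_sum fun q _ => hfin q
    _ = ((∑ q, |α q| * (m q : ℝ) * ((m q : ℝ) - 1)) / 4) * D := by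
        rw [← Finset.sum_div, ← Finset.sum_mul]
        ring


end
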